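/- The Kato norm of the Yukawa potential equals $4\pi$: $\sup_{x \in \mathbb{R}^3} \int_{\mathbb{R}^3} \frac{e^{-|y|}}{|y|\,|x-y|}\, dy = 4\pi$. -/

import Mathlib

open MeasureTheory Real Set Metric
open scoped ENNReal

namespace YukawaKato

noncomputable section

local notation "E3" => EuclideanSpace ℝ (Fin 3)

def f (y : E3) : ℝ := Real.exp (-‖y‖) / ‖y‖
def g (y : E3) : ℝ := 1 / ‖y‖

lemma meas_f : Measurable f :=
  (Real.measurable_exp.comp measurable_norm.neg).div measurable_norm

lemma meas_g : Measurable g := measurable_const.div measurable_norm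

lemma f_nonneg (y : E3) : 0 ≤ f y := div_nonneg (Real.exp_pos _).le (norm_nonneg _)

lemma g_nonneg (y : E3) : 0 ≤ g y := div_nonneg one_pos.le (norm_nonneg _)

lemma ind_ne_top {α : Type*} (S : Set α) (a : α) :
    S.indicator (1 : α → ℝ≥0∞) a ≠ ⊤ := by
  classical
  by_cases h : a ∈ S <;> simp [Set.indicator_apply, h]

/-- layer cake for a single real number -/
lemma layer (p : ℝ) :
    ENNReal.ofReal p = ∫⁻ s in Ioi (0:ℝ), (Iio p).indicator 1 s := by
  rw [lintegral_indicator measurableSet_Iio, Measure.restrict_restrict measurableSet_Iio]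
  have : Iio p ∩ Ioi (0:ℝ) = Ioo 0 p := by ext r; simp [and_comm]
  rw [this]
  simp [Real.volume_Ioo]

-- conv_eq
lemma conv_eq (h k : E3 → ℝ) (hh : Measurable h) (hk : Measurable k) :
    ∫⁻ y, ENNReal.ofReal (h y) * ENNReal.ofReal (k y) =
      ∫⁻ s in Ioi (0:ℝ), ∫⁻ t in Ioi (0:ℝ),
        volume ({y | s < h y} ∩ {y | t < k y}) := by
  have meas_ind_h : Measurable fun p : E3 × ℝ => (Iio (h p.1)).indicator (1 : ℝ → ℝ≥0∞) p.2 := by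
    have : (fun p : E3 × ℝ => (Iio (h p.1)).indicator (1 : ℝ → ℝ≥0∞) p.2)
        = {q : E3 × ℝ | q.2 < h q.1}.indicator 1 := by
      funext p
      simp [Set.indicator_apply]
    rw [this]
    exact measurable_const.indicator (measurableSet_lt measurable_snd (hh.comp measurable_fst))
  have meas_ind_k : Measurable fun p : E3 × ℝ => (Iio (k p.1)).indicator (1 : ℝ → ℝ≥0∞) p.2 := by
    have : (fun p : E3 × ℝ => (Iio (k p.1)).indicator (1 : ℝ → ℝ≥0∞) p.2)
        = {q : E3 × ℝ | q.2 < k q.1}.indicator 1 := by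
      funext p
      simp [Set.indicator_apply]
    rw [this]
    exact measurable_const.indicator (measurableSet_lt measurable_snd (hk.comp measurable_fst))
  calc
    ∫⁻ y, ENNReal.ofReal (h y) * ENNReal.ofReal (k y)
        = ∫⁻ y, ∫⁻ s in Ioi (0:ℝ),
            (Iio (h y)).indicator 1 s * ENNReal.ofReal (k y) := by
          refine lintegral_congr fun y => ?_
          rw [layer (h y), lintegral_mul_const' _ _ ENNReal.ofReal_ne_top]
    _ = ∫⁻ s in Ioi (0:ℝ), ∫⁻ y,
            (Iio (h y)).indicator 1 s * ENNReal.ofReal (k y) := by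
          refine lintegral_lintegral_swap ?_
          exact (meas_ind_h.mul
            (ENNReal.measurable_ofReal.comp (hk.comp measurable_fst))).aemeasurable
    _ = ∫⁻ s in Ioi (0:ℝ), ∫⁻ t in Ioi (0:ℝ), ∫⁻ y,
            (Iio (h y)).indicator 1 s * (Iio (k y)).indicator 1 t := by
          refine lintegral_congr fun s => ?_
          rw [← lintegral_lintegral_swap]
          · refine lintegral_congr fun y => ?_
            rw [layer (k y), ← lintegral_const_mul' _ _ (ind_ne_top _ _)]
          · apply Measurable.aemeasurable
            have e1 : (Function.uncurry fun (y : E3) (t : ℝ) =>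
                (Iio (h y)).indicator (1 : ℝ → ℝ≥0∞) s * (Iio (k y)).indicator 1 t)
                = fun p : E3 × ℝ => ({y : E3 | s < h y}).indicator (1 : E3 → ℝ≥0∞) p.1 *
                  (Iio (k p.1)).indicator (1 : ℝ → ℝ≥0∞) p.2 := by
              funext p
              simp [Function.uncurry, Set.indicator_apply]
            rw [e1]
            exact ((measurable_const.indicator
              (measurableSet_lt measurable_const hh)).comp measurable_fst).mul meas_ind_k
    _ = ∫⁻ s in Ioi (0:ℝ), ∫⁻ t in Ioi (0:ℝ),
        volume ({y | s < h y} ∩ {y | t < k y}) := by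
          refine lintegral_congr fun s => lintegral_congr fun t => ?_
          have : ∀ y : E3, (Iio (h y)).indicator (1 : ℝ → ℝ≥0∞) s * (Iio (k y)).indicator 1 t
              = ({y | s < h y} ∩ {y | t < k y}).indicator (1 : E3 → ℝ≥0∞) y := by
            intro y
            by_cases h1 : s < h y <;> by_cases h2 : t < k y <;>
              simp [Set.indicator_apply, h1, h2]
          rw [lintegral_congr this, lintegral_indicator_one
            (((measurableSet_lt measurable_const hh).inter (measurableSet_lt measurable_const hk)))]

lemma nested {s t : ℝ} (hs : 0 < s) (ht : 0 < t) :
    {y : E3 | s < f y} ⊆ {y | t < g y} ∨ {y : E3 | t < g y} ⊆ {y | s < f y} := by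
  by_cases hA : {y : E3 | s < f y} ⊆ {y | t < g y}
  · exact Or.inl hA
  · right
    obtain ⟨a, ha, hab⟩ := not_subset.mp hA
    simp only [mem_setOf_eq, not_lt] at ha hab
    have hna : 0 < ‖a‖ := by
      rcases (norm_nonneg a).lt_or_eq with h | h
      · exact h
      · exfalso
        rw [f, ← h, div_zero] at ha
        exact absurd ha (not_lt.mpr hs.le)
    intro b hb
    simp only [mem_setOf_eq] at hb ⊢
    have hnb : 0 < ‖b‖ := by
      rcases (norm_nonneg b).lt_or_eq with h | h
      · exact h
      · exfalso
        rw [g, ← h, div_zero] at hb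
        exact absurd hb (not_lt.mpr ht.le)
    have hba : ‖b‖ < ‖a‖ := by
      have h1 : 1 / ‖a‖ < 1 / ‖b‖ := lt_of_le_of_lt hab hb
      exact lt_of_one_div_lt_one_div hna h1
    calc s < f a := ha
      _ ≤ f b := by
        rw [f, f]
        exact div_le_div₀ (Real.exp_pos _).le (Real.exp_le_exp.mpr (by linarith)) hnb hba.le

lemma vol_le (x : E3) {s t : ℝ} (hs : 0 < s) (ht : 0 < t) :
    volume ({y : E3 | s < f y} ∩ {y | t < g (x - y)}) ≤
      volume ({y : E3 | s < f y} ∩ {y | t < g y}) := by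
  have hC : volume {y : E3 | t < g (x - y)} = volume {y : E3 | t < g y} := by
    have h1 : {y : E3 | t < g (x - y)} = (fun y : E3 => -y) ⁻¹' ((fun y : E3 => x + y) ⁻¹' {y : E3 | t < g y}) := by
      ext y
      simp [sub_eq_add_neg]
    rw [h1, Measure.measure_preimage_neg, measure_preimage_add]
  rcases nested hs ht with hAB | hBA
  · calc volume ({y : E3 | s < f y} ∩ {y | t < g (x - y)})
        ≤ volume {y : E3 | s < f y} := measure_mono inter_subset_left
      _ = volume ({y : E3 | s < f y} ∩ {y | t < g y}) := by
          rw [inter_eq_self_of_subset_left hAB]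
  · calc volume ({y : E3 | s < f y} ∩ {y | t < g (x - y)})
        ≤ volume {y : E3 | t < g (x - y)} := measure_mono inter_subset_right
      _ = volume {y : E3 | t < g y} := hC
      _ = volume ({y : E3 | s < f y} ∩ {y | t < g y}) := by
          rw [inter_eq_self_of_subset_right hBA]

lemma Fmain (x : E3) :
    ∫⁻ y, ENNReal.ofReal (f y) * ENNReal.ofReal (g (x - y)) ≤
      ∫⁻ y, ENNReal.ofReal (f y) * ENNReal.ofReal (g y) := by
  rw [conv_eq f (fun y => g (x - y)) meas_f
    (meas_g.comp (measurable_const.sub measurable_id)),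
    conv_eq f g meas_f meas_g]
  refine lintegral_mono_ae ?_
  filter_upwards [ae_restrict_mem measurableSet_Ioi] with s hs
  refine lintegral_mono_ae ?_
  filter_upwards [ae_restrict_mem measurableSet_Ioi] with t ht
  exact vol_le x hs ht

lemma lint_radial (G : ℝ → ℝ≥0∞) (hG : Measurable G) :
    ∫⁻ x : E3, G ‖x‖ =
      (Module.finrank ℝ E3) * volume (ball (0 : E3) 1) *
        ∫⁻ r in Ioi (0:ℝ), ENNReal.ofReal (r ^ 2) * G r := by
  have hdim : Module.finrank ℝ E3 = 3 := finrank_euclideanSpace_fin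
  have hmeas : Measurable fun p : sphere (0:E3) 1 × Ioi (0:ℝ) => G p.2.1 :=
    hG.comp (measurable_subtype_coe.comp measurable_snd)
  have h1 : ∫⁻ x : E3, G ‖x‖
      = ∫⁻ x : ({0}ᶜ : Set E3), G ‖x.1‖ ∂(Measure.comap Subtype.val volume) := by
    rw [lintegral_subtype_comap (measurableSet_singleton (0:E3)).compl fun x => G ‖x‖,
      restrict_compl_singleton]
  have h2 : (∫⁻ x : ({0}ᶜ : Set E3), G ‖x.1‖ ∂(Measure.comap Subtype.val volume))
      = ∫⁻ p : sphere (0:E3) 1 × Ioi (0:ℝ), G p.2.1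
          ∂((volume : Measure E3).toSphere.prod
              (Measure.volumeIoiPow (Module.finrank ℝ E3 - 1))) := by
    rw [← (Measure.measurePreserving_homeomorphUnitSphereProd
      (volume : Measure E3)).lintegral_comp hmeas]
    exact lintegral_congr fun x => by simp
  have h3 : (∫⁻ p : sphere (0:E3) 1 × Ioi (0:ℝ), G p.2.1
          ∂((volume : Measure E3).toSphere.prod
              (Measure.volumeIoiPow (Module.finrank ℝ E3 - 1))))
      = (volume : Measure E3).toSphere univ *
          ∫⁻ r : Ioi (0:ℝ), G r.1 ∂(Measure.volumeIoiPow (Module.finrank ℝ E3 - 1)) := by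
    rw [lintegral_prod _ hmeas.aemeasurable]
    have hcongr : ∀ x : sphere (0:E3) 1,
        (∫⁻ y : Ioi (0:ℝ), G ((x, y)).2.1
            ∂(Measure.volumeIoiPow (Module.finrank ℝ E3 - 1)))
          = ∫⁻ r : Ioi (0:ℝ), G r.1 ∂(Measure.volumeIoiPow (Module.finrank ℝ E3 - 1)) :=
      fun x => rfl
    rw [lintegral_congr hcongr, lintegral_const, mul_comm]
  have h4 : (∫⁻ r : Ioi (0:ℝ), G r.1 ∂(Measure.volumeIoiPow (Module.finrank ℝ E3 - 1)))
      = ∫⁻ r in Ioi (0:ℝ), ENNReal.ofReal (r ^ 2) * G r := by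
    rw [hdim]
    show (∫⁻ r : Ioi (0:ℝ), G r.1 ∂(Measure.volumeIoiPow 2)) = _
    have hg' : Measurable fun r : Ioi (0:ℝ) => G r.1 := hG.comp measurable_subtype_coe
    rw [Measure.volumeIoiPow, lintegral_withDensity_eq_lintegral_mul _
      ((measurable_subtype_coe.pow_const 2).ennreal_ofReal) hg']
    rw [← lintegral_subtype_comap measurableSet_Ioi
      (fun r : ℝ => ENNReal.ofReal (r ^ 2) * G r)]
    exact lintegral_congr fun r => by simp
  rw [h1, h2, h3, h4, Measure.toSphere_apply_univ]
lemma F0 : ∫⁻ y : E3, ENNReal.ofReal (f y) * ENNReal.ofReal (g y)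
    = ENNReal.ofReal (4 * π) := by
  have hGmeas : Measurable fun r : ℝ => ENNReal.ofReal (Real.exp (-r) / r ^ 2) :=
    ((Real.measurable_exp.comp measurable_neg).div (measurable_id.pow_const 2)).ennreal_ofReal
  have hfg : ∀ y : E3, ENNReal.ofReal (f y) * ENNReal.ofReal (g y)
      = ENNReal.ofReal (Real.exp (-‖y‖) / ‖y‖ ^ 2) := by
    intro y
    rw [← ENNReal.ofReal_mul (f_nonneg y), f, g, div_mul_div_comm, mul_one, sq]
  have hint : ∫⁻ r in Ioi (0:ℝ), ENNReal.ofReal (r ^ 2) *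
      ENNReal.ofReal (Real.exp (-r) / r ^ 2) = 1 := by
    have h1 : ∀ r ∈ Ioi (0:ℝ), ENNReal.ofReal (r ^ 2) *
        ENNReal.ofReal (Real.exp (-r) / r ^ 2) = ENNReal.ofReal (Real.exp (-r)) := by
      intro r hr
      have hr2 : (r : ℝ) ^ 2 ≠ 0 := pow_ne_zero 2 (ne_of_gt hr)
      rw [← ENNReal.ofReal_mul (sq_nonneg r)]
      congr 1
      rw [mul_comm, div_mul_cancel₀ _ hr2]
    rw [setLIntegral_congr_fun measurableSet_Ioi h1,
      ← ofReal_integral_eq_lintegral_ofReal]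
    · rw [integral_exp_neg_Ioi_zero, ENNReal.ofReal_one]
    · have := exp_neg_integrableOn_Ioi 0 (one_pos (α := ℝ))
      exact (by simpa using this : IntegrableOn (fun x : ℝ => Real.exp (-x)) (Ioi 0) volume)
    · exact ae_of_all _ fun r => (Real.exp_pos _).le
  have hball : volume (ball (0:E3) 1) = ENNReal.ofReal (4 * π / 3) := by
    rw [EuclideanSpace.volume_ball]
    have hΓ : Real.Gamma ((Fintype.card (Fin 3) : ℝ) / 2 + 1) = 3 / 4 * Real.sqrt π := by
      rw [Fintype.card_fin]
      push_cast
      rw [show (3:ℝ)/2 + 1 = (3/2 : ℝ) + 1 from rfl, Real.Gamma_add_one (by norm_num),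
        show (3:ℝ)/2 = 1/2 + 1 by norm_num, Real.Gamma_add_one (by norm_num),
        Real.Gamma_one_half_eq]
      ring
    rw [hΓ, Fintype.card_fin]
    have hsq : Real.sqrt π ^ 3 = π * Real.sqrt π := by
      rw [pow_succ, Real.sq_sqrt pi_nonneg]
    have hs : (0:ℝ) < Real.sqrt π := Real.sqrt_pos.mpr pi_pos
    rw [hsq]
    rw [show π * Real.sqrt π / (3 / 4 * Real.sqrt π) = 4 * π / 3 by
      field_simp]
    simp
  have step : ∫⁻ y : E3, ENNReal.ofReal (f y) * ENNReal.ofReal (g y)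
      = ∫⁻ y : E3, (fun r : ℝ => ENNReal.ofReal (Real.exp (-r) / r ^ 2)) ‖y‖ :=
    lintegral_congr fun y => hfg y
  rw [step, lint_radial _ hGmeas, hint, hball, finrank_euclideanSpace_fin, mul_one]
  rw [show ((3:ℕ) : ℝ≥0∞) = ENNReal.ofReal (3:ℝ) by simp,
    ← ENNReal.ofReal_mul (by norm_num)]
  congr 1
  ring

lemma hpoint (x y : E3) :
    Real.exp (-‖y‖) / (‖y‖ * ‖x - y‖) = f y * g (x - y) := by
  rw [f, g, div_mul_div_comm, mul_one]

lemma nonnegI (x y : E3) : 0 ≤ Real.exp (-‖y‖) / (‖y‖ * ‖x - y‖) :=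
  div_nonneg (Real.exp_pos _).le (mul_nonneg (norm_nonneg _) (norm_nonneg _))

lemma measI (x : E3) :
    Measurable fun y : E3 => Real.exp (-‖y‖) / (‖y‖ * ‖x - y‖) :=
  (Real.measurable_exp.comp measurable_norm.neg).div
    (measurable_norm.mul ((measurable_const.sub measurable_id).norm))

lemma Fx_le (x : E3) :
    ∫⁻ y : E3, ENNReal.ofReal (Real.exp (-‖y‖) / (‖y‖ * ‖x - y‖))
      ≤ ENNReal.ofReal (4 * π) := by
  calc ∫⁻ y : E3, ENNReal.ofReal (Real.exp (-‖y‖) / (‖y‖ * ‖x - y‖))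
      = ∫⁻ y : E3, ENNReal.ofReal (f y) * ENNReal.ofReal (g (x - y)) :=
        lintegral_congr fun y => by rw [hpoint, ENNReal.ofReal_mul (f_nonneg y)]
    _ ≤ ∫⁻ y : E3, ENNReal.ofReal (f y) * ENNReal.ofReal (g y) := Fmain x
    _ = ENNReal.ofReal (4 * π) := F0

lemma Fx_eq0 :
    ∫⁻ y : E3, ENNReal.ofReal (Real.exp (-‖y‖) / (‖y‖ * ‖(0:E3) - y‖))
      = ENNReal.ofReal (4 * π) := by
  calc ∫⁻ y : E3, ENNReal.ofReal (Real.exp (-‖y‖) / (‖y‖ * ‖(0:E3) - y‖))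
      = ∫⁻ y : E3, ENNReal.ofReal (f y) * ENNReal.ofReal (g y) := by
        refine lintegral_congr fun y => ?_
        rw [hpoint, ENNReal.ofReal_mul (f_nonneg y)]
        congr 2
        rw [g, g, zero_sub, norm_neg]
    _ = ENNReal.ofReal (4 * π) := F0

lemma int_eq (x : E3) :
    ∫ y : E3, Real.exp (-‖y‖) / (‖y‖ * ‖x - y‖)
      = (∫⁻ y : E3, ENNReal.ofReal (Real.exp (-‖y‖) / (‖y‖ * ‖x - y‖))).toReal :=
  integral_eq_lintegral_of_nonneg_ae (ae_of_all _ (nonnegI x))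
    (measI x).aestronglyMeasurable

lemma int_le (x : E3) :
    ∫ y : E3, Real.exp (-‖y‖) / (‖y‖ * ‖x - y‖) ≤ 4 * π := by
  rw [int_eq x]
  exact ENNReal.toReal_le_of_le_ofReal (by positivity) (Fx_le x)

lemma int_zero :
    ∫ y : E3, Real.exp (-‖y‖) / (‖y‖ * ‖(0:E3) - y‖) = 4 * π := by
  rw [int_eq 0, Fx_eq0, ENNReal.toReal_ofReal (by positivity)]

end

end YukawaKato

open YukawaKato in
theorem yukawa_kato_norm :
    (⨆ x : EuclideanSpace ℝ (Fin 3),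
      ∫ y : EuclideanSpace ℝ (Fin 3), Real.exp (-‖y‖) / (‖y‖ * ‖x - y‖))
        = 4 * Real.pi := by
  refine le_antisymm (ciSup_le int_le) ?_
  have h0 := int_zero
  calc (4 : ℝ) * Real.pi
      = ∫ y : EuclideanSpace ℝ (Fin 3),
          Real.exp (-‖y‖) / (‖y‖ * ‖(0 : EuclideanSpace ℝ (Fin 3)) - y‖) := h0.symm
    _ ≤ _ := by
        refine le_ciSup (f := fun x : EuclideanSpace ℝ (Fin 3) =>
          ∫ y : EuclideanSpace ℝ (Fin 3), Real.exp (-‖y‖) / (‖y‖ * ‖x - y‖)) ?_ 0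
        refine ⟨4 * Real.pi, ?_⟩
        rintro _ ⟨x, rfl⟩
        exact int_le x
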